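/- Let (X, ν) and (S, μ) be σ-finite measure spaces. Let h₁, h₂ : X × S → [0, ∞) be measurable functions such that ∫ h₁(x, s) dν(x) ≤ 1 and ∫ h₂(x, s) dν(x) ≤ 1 for every s ∈ S, and let f₁, f₂ : S → [0, ∞) be measurable. Then for every measurable set B ⊆ X × S: ∫∫_B |h₁(x, s) − h₂(x, s)| · f₁(s) dν(x) dμ(s) ≤ 2 ∫∫_B |h₁(x, s) f₁(s) − h₂(x, s) f₂(s)| dν(x) dμ(s) + 2 ∫_S |f₁(s) − f₂(s)| dμ(s), where the inequality is understood in [0, ∞]. -/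

import Mathlib

open MeasureTheory
open scoped ENNReal

/-- abstract comparison lemma. If `h₁(·, s)` and `h₂(·, s)` are sub-probability
densities in `x` for every `s`, then for any measurable `B ⊆ X × S`,
`∫∫_B |h₁ − h₂|·f₁ ≤ 2·∫∫_B |h₁f₁ − h₂f₂| + 2·∫ |f₁ − f₂|`, in `[0, ∞]`. -/
theorem stmt8 {X S : Type*} [MeasurableSpace X] [MeasurableSpace S]
    (ν : Measure X) (μ : Measure S) [SigmaFinite ν] [SigmaFinite μ]
    (h₁ h₂ : X → S → ℝ) (f₁ f₂ : S → ℝ)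
    (hm1 : Measurable (Function.uncurry h₁)) (hm2 : Measurable (Function.uncurry h₂))
    (h1nn : ∀ x s, 0 ≤ h₁ x s) (h2nn : ∀ x s, 0 ≤ h₂ x s)
    (hint1 : ∀ s, ∫⁻ x, ENNReal.ofReal (h₁ x s) ∂ν ≤ 1)
    (hint2 : ∀ s, ∫⁻ x, ENNReal.ofReal (h₂ x s) ∂ν ≤ 1)
    (hf1 : Measurable f₁) (hf2 : Measurable f₂)
    (hf1nn : ∀ s, 0 ≤ f₁ s) (hf2nn : ∀ s, 0 ≤ f₂ s)
    (B : Set (X × S)) (hB : MeasurableSet B) :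
    ∫⁻ p in B, ENNReal.ofReal (|h₁ p.1 p.2 - h₂ p.1 p.2| * f₁ p.2) ∂(ν.prod μ)
      ≤ 2 * ∫⁻ p in B, ENNReal.ofReal |h₁ p.1 p.2 * f₁ p.2 - h₂ p.1 p.2 * f₂ p.2| ∂(ν.prod μ)
        + 2 * ∫⁻ s, ENNReal.ofReal |f₁ s - f₂ s| ∂μ := by
  set A := ∫⁻ p in B, ENNReal.ofReal |h₁ p.1 p.2 * f₁ p.2 - h₂ p.1 p.2 * f₂ p.2| ∂(ν.prod μ)
  set C := ∫⁻ s, ENNReal.ofReal |f₁ s - f₂ s| ∂μ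
  have key : ∫⁻ p in B, ENNReal.ofReal (|h₁ p.1 p.2 - h₂ p.1 p.2| * f₁ p.2) ∂(ν.prod μ)
      ≤ A + ∫⁻ p in B, ENNReal.ofReal (h₂ p.1 p.2 * |f₁ p.2 - f₂ p.2|) ∂(ν.prod μ) := by
    rw [← lintegral_add_left']
    · apply lintegral_mono
      intro p
      simp only []
      rw [← ENNReal.ofReal_add (abs_nonneg _)
        (mul_nonneg (h2nn _ _) (abs_nonneg _))]
      apply ENNReal.ofReal_le_ofReal
      have : |h₁ p.1 p.2 - h₂ p.1 p.2| * f₁ p.2 = |h₁ p.1 p.2 * f₁ p.2 - h₂ p.1 p.2 * f₁ p.2| := by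
        rw [← sub_mul, abs_mul, abs_of_nonneg (hf1nn _)]
      rw [this]
      calc |h₁ p.1 p.2 * f₁ p.2 - h₂ p.1 p.2 * f₁ p.2|
          ≤ |h₁ p.1 p.2 * f₁ p.2 - h₂ p.1 p.2 * f₂ p.2|
            + |h₂ p.1 p.2 * f₂ p.2 - h₂ p.1 p.2 * f₁ p.2| := abs_sub_le _ _ _
        _ = _ := by
            congr 1
            rw [← mul_sub, abs_mul, abs_of_nonneg (h2nn _ _), abs_sub_comm]
    · exact (((hm1.mul (hf1.comp measurable_snd)).sub
        (hm2.mul (hf2.comp measurable_snd))).abs.ennreal_ofReal).aemeasurable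
  have key2 : ∫⁻ p in B, ENNReal.ofReal (h₂ p.1 p.2 * |f₁ p.2 - f₂ p.2|) ∂(ν.prod μ) ≤ C := by
    calc ∫⁻ p in B, ENNReal.ofReal (h₂ p.1 p.2 * |f₁ p.2 - f₂ p.2|) ∂(ν.prod μ)
        ≤ ∫⁻ p, ENNReal.ofReal (h₂ p.1 p.2 * |f₁ p.2 - f₂ p.2|) ∂(ν.prod μ) :=
          setLIntegral_le_lintegral _ _
      _ = ∫⁻ s, ∫⁻ x, ENNReal.ofReal (h₂ x s * |f₁ s - f₂ s|) ∂ν ∂μ := by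
          apply MeasureTheory.lintegral_prod_symm
          exact (hm2.mul ((hf1.sub hf2).abs.comp measurable_snd)).ennreal_ofReal.aemeasurable
      _ = ∫⁻ s, (∫⁻ x, ENNReal.ofReal (h₂ x s) ∂ν) * ENNReal.ofReal |f₁ s - f₂ s| ∂μ := by
          refine lintegral_congr fun s => ?_
          rw [← lintegral_mul_const' _ _ ENNReal.ofReal_ne_top]
          refine lintegral_congr fun x => ?_
          rw [← ENNReal.ofReal_mul (h2nn _ _)]
      _ ≤ ∫⁻ s, ENNReal.ofReal |f₁ s - f₂ s| ∂μ := by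
          refine lintegral_mono fun s => ?_
          calc (∫⁻ x, ENNReal.ofReal (h₂ x s) ∂ν) * ENNReal.ofReal |f₁ s - f₂ s|
              ≤ 1 * ENNReal.ofReal |f₁ s - f₂ s| := by
                exact mul_le_mul_left (hint2 s) _
            _ = _ := one_mul _
  calc ∫⁻ p in B, ENNReal.ofReal (|h₁ p.1 p.2 - h₂ p.1 p.2| * f₁ p.2) ∂(ν.prod μ)
      ≤ A + C := key.trans (add_le_add_right key2 A)
    _ ≤ 2 * A + 2 * C := by
        apply add_le_add <;> simp [two_mul, le_add_iff_nonneg_left]
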